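/- (Inheritance structure of Schur complements of a positive Toeplitz operator.) Let T_Q = (Q_{i-j})_{i,j≥0} be a positive semidefinite Toeplitz operator on ℓ²_H(ℕ₀) and let S(m) denote the Schur complement of T_Q supported on rows and columns {0,…,m}. Then the lower-right m×m corner of S(m) (rows and columns 1,…,m) equals S(m-1); i.e., S(m) = [[A, B*],[B, S(m-1)]] for some operators A : H → H and B : H → H^m. -/

import Mathlib

open scoped InnerProductSpace
open ContinuousLinearMap

section

variable {H : Type*} [NormedAddCommGroup H] [InnerProductSpace ℂ H] [CompleteSpace H]

/-- The quadratic form of the block Toeplitz matrix `(Q_{i-j})_{i,j≥0}` on vectors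
supported in `{0,…,N-1}`. -/
noncomputable def toepQF (Q : ℤ → H →L[ℂ] H) (N : ℕ) (v : ℕ → H) : ℝ :=
  ∑ i ∈ Finset.range N, ∑ j ∈ Finset.range N, (⟪Q ((i : ℤ) - (j : ℤ)) (v j), v i⟫_ℂ).re

/-- The block Toeplitz matrix `(Q_{i-j})_{i,j≥0}` is (hermitian and) positive
semidefinite on finitely supported sequences. -/
def ToepPos (Q : ℤ → H →L[ℂ] H) : Prop :=
  (∀ k : ℤ, Q (-k) = (Q k).adjoint) ∧ ∀ N v, 0 ≤ toepQF Q N v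

/-- The quadratic form of a block matrix supported on `{0,…,m} × {0,…,m}`. -/
noncomputable def schurQF (m : ℕ) (S : ℕ → ℕ → H →L[ℂ] H) (v : ℕ → H) : ℝ :=
  ∑ i ∈ Finset.range (m + 1), ∑ j ∈ Finset.range (m + 1), (⟪S i j (v j), v i⟫_ℂ).re

/-- `S` is the Schur complement `S(m)` of the positive Toeplitz operator `T_Q` supported
on rows and columns `{0,…,m}`: the maximal positive operator matrix supported there
with `T_Q - S ≥ 0`. -/
def IsSchurToep (Q : ℤ → H →L[ℂ] H) (m : ℕ) (S : ℕ → ℕ → H →L[ℂ] H) : Prop :=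
  (∀ i j, m < i ∨ m < j → S i j = 0) ∧ (∀ i j, (S i j).adjoint = S j i) ∧
    (∀ v, 0 ≤ schurQF m S v) ∧
    (∀ N (v : ℕ → H), (∀ k, N ≤ k → v k = 0) → schurQF m S v ≤ toepQF Q N v) ∧
    ∀ X : ℕ → ℕ → H →L[ℂ] H, (∀ i j, m < i ∨ m < j → X i j = 0) →
      (∀ i j, (X i j).adjoint = X j i) → (∀ v, 0 ≤ schurQF m X v) →
      (∀ N (v : ℕ → H), (∀ k, N ≤ k → v k = 0) → schurQF m X v ≤ toepQF Q N v) →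
      ∀ v, schurQF m X v ≤ schurQF m S v

namespace SchurAux

variable (Q : ℤ → H →L[ℂ] H)

/-- padding: enlarging the range does not change the value for supported vectors -/
lemma toepQF_pad {N M : ℕ} (hNM : N ≤ M) {w : ℕ → H} (hw : ∀ k, N ≤ k → w k = 0) :
    toepQF Q M w = toepQF Q N w := by
  unfold toepQF
  rw [← Finset.sum_subset (Finset.range_subset_range.2 hNM)]
  · refine Finset.sum_congr rfl fun i hi => ?_
    refine (Finset.sum_subset (Finset.range_subset_range.2 hNM) ?_).symm
    intro j _ hj
    rw [hw j (by simpa using hj)]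
    simp
  · intro i _ hi
    rw [hw i (by simpa using hi)]
    simp

lemma toepQF_shift {N : ℕ} {w : ℕ → H} (h0 : w 0 = 0) :
    toepQF Q (N + 1) w = toepQF Q N (fun k => w (k + 1)) := by
  unfold toepQF
  rw [Finset.sum_range_succ']
  simp only [Nat.cast_zero, h0, inner_zero_right, Complex.zero_re, Finset.sum_const_zero,
    add_zero]
  refine Finset.sum_congr rfl fun i _ => ?_
  rw [Finset.sum_range_succ']
  simp only [Nat.cast_zero, h0, map_zero, inner_zero_left, Complex.zero_re, add_zero]
  refine Finset.sum_congr rfl fun j _ => ?_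
  congr 2
  push_cast
  ring

lemma toepQF_parallelogram (N : ℕ) (v w : ℕ → H) :
    toepQF Q N (v + w) + toepQF Q N (v - w) = 2 * toepQF Q N v + 2 * toepQF Q N w := by
  unfold toepQF
  rw [Finset.mul_sum, Finset.mul_sum, ← Finset.sum_add_distrib, ← Finset.sum_add_distrib]
  refine Finset.sum_congr rfl fun i _ => ?_
  rw [Finset.mul_sum, Finset.mul_sum, ← Finset.sum_add_distrib, ← Finset.sum_add_distrib]
  refine Finset.sum_congr rfl fun j _ => ?_
  simp only [Pi.add_apply, Pi.sub_apply, map_add, map_sub, inner_add_left, inner_add_right,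
    inner_sub_left, inner_sub_right, Complex.add_re, Complex.sub_re]
  ring

lemma toepQF_smul (N : ℕ) (c : ℂ) (v : ℕ → H) :
    toepQF Q N (c • v) = Complex.normSq c * toepQF Q N v := by
  unfold toepQF
  rw [Finset.mul_sum]
  refine Finset.sum_congr rfl fun i _ => ?_
  rw [Finset.mul_sum]
  refine Finset.sum_congr rfl fun j _ => ?_
  simp only [Pi.smul_apply, map_smul, inner_smul_left, inner_smul_right]
  rw [← mul_assoc, Complex.mul_conj, Complex.re_ofReal_mul]

/-- The set of values of the Toeplitz quadratic form over all finitely supported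
extensions of the first `m+1` coordinates of `v`. -/
def Ext (m : ℕ) (v : ℕ → H) : Set ℝ :=
  {r | ∃ N w, (∀ k, k ≤ m → w k = v k) ∧ (∀ k, N ≤ k → w k = 0) ∧ toepQF Q N w = r}

/-- The shorted quadratic form. -/
noncomputable def q (m : ℕ) (v : ℕ → H) : ℝ := sInf (Ext Q m v)

lemma ext_nonempty (m : ℕ) (v : ℕ → H) : (Ext Q m v).Nonempty := by
  refine ⟨toepQF Q (m + 1) (fun k => if k ≤ m then v k else 0), m + 1,
    fun k => if k ≤ m then v k else 0, fun k hk => if_pos hk, fun k hk => ?_, rfl⟩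
  exact if_neg (by omega)

lemma ext_bddBelow (hQ : ToepPos Q) (m : ℕ) (v : ℕ → H) : BddBelow (Ext Q m v) := by
  refine ⟨0, fun r hr => ?_⟩
  obtain ⟨N, w, -, -, rfl⟩ := hr
  exact hQ.2 N w

lemma q_nonneg (hQ : ToepPos Q) (m : ℕ) (v : ℕ → H) : 0 ≤ q Q m v :=
  le_csInf (ext_nonempty Q m v) (fun r hr => by obtain ⟨N, w, -, -, rfl⟩ := hr; exact hQ.2 N w)

lemma q_le (hQ : ToepPos Q) (m : ℕ) {v : ℕ → H} {r : ℝ} (hr : r ∈ Ext Q m v) :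
    q Q m v ≤ r :=
  csInf_le (ext_bddBelow Q hQ m v) hr

lemma le_q (m : ℕ) {v : ℕ → H} {c : ℝ} (h : ∀ r ∈ Ext Q m v, c ≤ r) : c ≤ q Q m v :=
  le_csInf (ext_nonempty Q m v) h

lemma ext_congr (m : ℕ) {v v' : ℕ → H} (h : ∀ k, k ≤ m → v k = v' k) :
    Ext Q m v = Ext Q m v' := by
  unfold Ext
  ext r
  constructor <;> rintro ⟨N, w, hw1, hw2, hw3⟩
  · exact ⟨N, w, fun k hk => (hw1 k hk).trans (h k hk), hw2, hw3⟩
  · exact ⟨N, w, fun k hk => (hw1 k hk).trans (h k hk).symm, hw2, hw3⟩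

lemma q_congr (m : ℕ) {v v' : ℕ → H} (h : ∀ k, k ≤ m → v k = v' k) :
    q Q m v = q Q m v' := by unfold q; rw [ext_congr Q m h]

lemma le_mul_q (m : ℕ) {v : ℕ → H} {c X : ℝ} (hc : 0 < c)
    (h : ∀ r ∈ Ext Q m v, X ≤ c * r) : X ≤ c * q Q m v := by
  rw [mul_comm, ← div_le_iff₀ hc]
  refine le_q Q m fun r hr => ?_
  rw [div_le_iff₀ hc, mul_comm]
  exact h r hr

lemma q_smul (hQ : ToepPos Q) (m : ℕ) (c : ℂ) (v : ℕ → H) :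
    q Q m (c • v) = Complex.normSq c * q Q m v := by
  rcases eq_or_ne c 0 with rfl | hc
  · simp only [Complex.normSq_zero, zero_mul, zero_smul]
    refine le_antisymm ?_ (q_nonneg Q hQ m 0)
    refine q_le Q hQ m ⟨0, 0, fun k _ => rfl, fun k _ => rfl, ?_⟩
    simp [toepQF]
  · have hpos : (0:ℝ) < Complex.normSq c := Complex.normSq_pos.2 hc
    have key : ∀ (d : ℂ) (w : ℕ → H), d ≠ 0 →
        q Q m (d • w) ≤ Complex.normSq d * q Q m w := by
      intro d w hd
      refine le_mul_q Q m (Complex.normSq_pos.2 hd) fun r hr => ?_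
      obtain ⟨N, u, hu1, hu2, hu3⟩ := hr
      refine (q_le Q hQ m ⟨N, d • u, fun k hk => by simp [hu1 k hk],
        fun k hk => by simp [hu2 k hk], rfl⟩).trans ?_
      rw [toepQF_smul, hu3]
    refine le_antisymm (key c v hc) ?_
    have h2 := key c⁻¹ (c • v) (inv_ne_zero hc)
    rw [smul_smul, inv_mul_cancel₀ hc, one_smul, Complex.normSq_inv] at h2
    calc Complex.normSq c * q Q m v ≤ Complex.normSq c * ((Complex.normSq c)⁻¹ *
          q Q m (c • v)) := (mul_le_mul_iff_right₀ hpos).2 h2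
      _ = q Q m (c • v) := by field_simp

lemma q_zero (hQ : ToepPos Q) (m : ℕ) : q Q m (0 : ℕ → H) = 0 := by
  have := q_smul Q hQ m 0 0
  simpa using this

lemma q_neg (hQ : ToepPos Q) (m : ℕ) (v : ℕ → H) : q Q m (-v) = q Q m v := by
  have := q_smul Q hQ m (-1) v
  simpa using this

lemma q_parallelogram_le (hQ : ToepPos Q) (m : ℕ) (v w : ℕ → H) :
    q Q m (v + w) + q Q m (v - w) ≤ 2 * q Q m v + 2 * q Q m w := by
  have key : ∀ r ∈ Ext Q m v, ∀ s ∈ Ext Q m w,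
      q Q m (v + w) + q Q m (v - w) ≤ 2 * r + 2 * s := by
    rintro r ⟨N, a, ha1, ha2, ha3⟩ s ⟨M, b, hb1, hb2, hb3⟩
    set K := max N M with hK
    have ha2' : ∀ k, K ≤ k → a k = 0 := fun k hk => ha2 k (le_trans (le_max_left N M) hk)
    have hb2' : ∀ k, K ≤ k → b k = 0 := fun k hk => hb2 k (le_trans (le_max_right N M) hk)
    have h1 : q Q m (v + w) ≤ toepQF Q K (a + b) :=
      q_le Q hQ m ⟨K, a + b, fun k hk => by simp [Pi.add_apply, ha1 k hk, hb1 k hk],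
        fun k hk => by simp [Pi.add_apply, ha2' k hk, hb2' k hk], rfl⟩
    have h2 : q Q m (v - w) ≤ toepQF Q K (a - b) :=
      q_le Q hQ m ⟨K, a - b, fun k hk => by simp [Pi.sub_apply, ha1 k hk, hb1 k hk],
        fun k hk => by simp [Pi.sub_apply, ha2' k hk, hb2' k hk], rfl⟩
    have h3 := toepQF_parallelogram Q K a b
    have h4 : toepQF Q K a = r := by rw [toepQF_pad Q (le_max_left N M) ha2, ha3]
    have h5 : toepQF Q K b = s := by rw [toepQF_pad Q (le_max_right N M) hb2, hb3]
    rw [h4, h5] at h3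
    linarith
  have key2 : ∀ s ∈ Ext Q m w,
      q Q m (v + w) + q Q m (v - w) - 2 * s ≤ 2 * q Q m v := by
    intro s hs
    have := le_mul_q Q m (v := v) (c := 2)
      (X := q Q m (v + w) + q Q m (v - w) - 2 * s) (by norm_num)
      (fun r hr => by linarith [key r hr s hs])
    linarith
  have := le_mul_q Q m (v := w) (c := 2)
    (X := q Q m (v + w) + q Q m (v - w) - 2 * q Q m v) (by norm_num)
    (fun s hs => by linarith [key2 s hs])
  linarith

lemma q_parallelogram (hQ : ToepPos Q) (m : ℕ) (v w : ℕ → H) :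
    q Q m (v + w) + q Q m (v - w) = 2 * q Q m v + 2 * q Q m w := by
  refine le_antisymm (q_parallelogram_le Q hQ m v w) ?_
  have h := q_parallelogram_le Q hQ m (v + w) (v - w)
  have e1 : v + w + (v - w) = (2:ℂ) • v := by
    funext k; simp [Pi.smul_apply, two_smul]; try abel
  have e2 : v + w - (v - w) = (2:ℂ) • w := by
    funext k; simp [Pi.smul_apply, two_smul]; try abel
  rw [e1, e2, q_smul Q hQ, q_smul Q hQ] at h
  have : Complex.normSq 2 = 4 := by norm_num [Complex.normSq]
  rw [this] at h
  linarith

/-- prepend a zero -/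
def shiftv (v : ℕ → H) : ℕ → H := fun k => match k with
  | 0 => 0
  | k+1 => v k

lemma q_shift (m : ℕ) (v : ℕ → H) : q Q (m + 1) (shiftv v) = q Q m v := by
  unfold q
  congr 1
  ext r
  constructor
  · rintro ⟨N, w, hw1, hw2, hw3⟩
    have hw0 : w 0 = 0 := hw1 0 (Nat.zero_le _)
    refine ⟨N, fun k => w (k + 1), fun k hk => hw1 (k + 1) (by omega), fun k hk => hw2 (k+1)
      (by omega), ?_⟩
    rw [← toepQF_shift Q hw0, toepQF_pad Q (Nat.le_succ N) hw2, hw3]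
  · rintro ⟨N, u, hu1, hu2, hu3⟩
    refine ⟨N + 1, shiftv u, fun k hk => ?_, fun k hk => ?_, ?_⟩
    · cases k with
      | zero => rfl
      | succ k => exact hu1 k (by omega)
    · cases k with
      | zero => omega
      | succ k => exact hu2 k (by omega)
    · rw [toepQF_shift Q rfl, ← hu3]
      rfl

/-- a vector supported at one coordinate -/
def sing (i : ℕ) (h : H) : ℕ → H := fun k => if k = i then h else 0

lemma sing_add (i : ℕ) (h h' : H) : sing i (h + h') = sing i h + sing i h' := by
  funext k
  by_cases hk : k = i <;> simp [sing, hk]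

lemma sing_smul (i : ℕ) (c : ℂ) (h : H) : sing (H := H) i (c • h) = c • sing i h := by
  funext k
  by_cases hk : k = i <;> simp [sing, hk]

lemma q_sing_le (hQ : ToepPos Q) (m i : ℕ) (h : H) :
    q Q m (sing i h) ≤ ‖Q 0‖ * ‖h‖ ^ 2 := by
  have hb : (0:ℝ) ≤ ‖Q 0‖ * ‖h‖ ^ 2 := by positivity
  by_cases him : i ≤ m
  · have hmem : toepQF Q (m + 1) (sing i h) ∈ Ext Q m (sing i h) :=
      ⟨m + 1, sing i h, fun k _ => rfl, fun k hk => if_neg (by omega), rfl⟩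
    refine (q_le Q hQ m hmem).trans ?_
    have : toepQF Q (m + 1) (sing i h) = (⟪Q 0 h, h⟫_ℂ).re := by
      unfold toepQF
      rw [Finset.sum_eq_single i]
      · rw [Finset.sum_eq_single i]
        · simp [sing]
        · intro b _ hb
          simp [sing, hb]
        · intro hi
          exact absurd (Finset.mem_range.2 (by omega)) hi
      · intro b _ hbne
        rw [Finset.sum_eq_zero]
        intro j _
        simp [sing, hbne]
      · intro hi
        exact absurd (Finset.mem_range.2 (by omega)) hi
    rw [this]
    calc (⟪Q 0 h, h⟫_ℂ).re ≤ ‖(⟪Q 0 h, h⟫_ℂ)‖ := Complex.re_le_norm _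
      _ ≤ ‖Q 0 h‖ * ‖h‖ := norm_inner_le_norm _ _
      _ ≤ ‖Q 0‖ * ‖h‖ * ‖h‖ := by
          have := (Q 0).le_opNorm h
          have : ‖Q 0 h‖ * ‖h‖ ≤ ‖Q 0‖ * ‖h‖ * ‖h‖ :=
            mul_le_mul_of_nonneg_right this (norm_nonneg h)
          linarith
      _ = ‖Q 0‖ * ‖h‖ ^ 2 := by ring
  · have : q Q m (sing i h) = q Q m 0 := q_congr Q m fun k hk => if_neg (by omega)
    rw [this, q_zero Q hQ]
    exact hb

/-- the real polarization of `q`. -/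
noncomputable def pf (m : ℕ) (x y : ℕ → H) : ℝ := (q Q m (x + y) - q Q m (x - y)) / 4

lemma pf_comm (hQ : ToepPos Q) (m : ℕ) (x y : ℕ → H) : pf Q m x y = pf Q m y x := by
  unfold pf
  rw [add_comm, show x - y = -(y - x) by abel, q_neg Q hQ]

lemma pf_zero_left (hQ : ToepPos Q) (m : ℕ) (y : ℕ → H) : pf Q m 0 y = 0 := by
  unfold pf
  rw [zero_add, zero_sub, q_neg Q hQ]
  ring

lemma pf_double (hQ : ToepPos Q) (m : ℕ) (x y : ℕ → H) :
    pf Q m (x + x) (y + y) = 4 * pf Q m x y := by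
  unfold pf
  have e1 : x + x + (y + y) = (2:ℂ) • (x + y) := by
    funext k; simp [Pi.smul_apply, two_smul]; try abel
  have e2 : x + x - (y + y) = (2:ℂ) • (x - y) := by
    funext k; simp [Pi.smul_apply, two_smul]; try abel
  rw [e1, e2, q_smul Q hQ, q_smul Q hQ]
  have : Complex.normSq 2 = 4 := by norm_num [Complex.normSq]
  rw [this]
  ring

lemma pf_add_left (hQ : ToepPos Q) (m : ℕ) (x₁ x₂ y : ℕ → H) :
    pf Q m (x₁ + x₂) y = pf Q m x₁ y + pf Q m x₂ y := by
  have key : ∀ a b z : ℕ → H, pf Q m (a + b) (z + z) = 2 * (pf Q m a z + pf Q m b z) := by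
    intro a b z
    have h1 := q_parallelogram Q hQ m (a + z) (b + z)
    have e1 : a + z + (b + z) = a + b + (z + z) := by abel
    have e2 : a + z - (b + z) = a - b := by abel
    rw [e1, e2] at h1
    have h2 := q_parallelogram Q hQ m (a - z) (b - z)
    have e3 : a - z + (b - z) = a + b - (z + z) := by abel
    have e4 : a - z - (b - z) = a - b := by abel
    rw [e3, e4] at h2
    unfold pf
    linarith
  have h3 := key x₁ x₂ y
  have h4 := key (x₁ + x₂) 0 y
  rw [add_zero] at h4
  have h5 : pf Q m (0 : ℕ → H) y = 0 := pf_zero_left Q hQ m y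
  -- pf (x₁+x₂) (y+y) = 2 pf (x₁+x₂) y  and  = 2 (pf x₁ y + pf x₂ y)
  rw [h5] at h4
  linarith

lemma pf_add_right (hQ : ToepPos Q) (m : ℕ) (x y₁ y₂ : ℕ → H) :
    pf Q m x (y₁ + y₂) = pf Q m x y₁ + pf Q m x y₂ := by
  rw [pf_comm Q hQ, pf_add_left Q hQ, pf_comm Q hQ m y₁ x, pf_comm Q hQ m y₂ x]

/-- `pf x` bundled as an additive homomorphism in the second variable. -/
noncomputable def pfHom (hQ : ToepPos Q) (m : ℕ) (x : ℕ → H) : (ℕ → H) →+ ℝ :=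
  AddMonoidHom.mk' (pf Q m x) (pf_add_right Q hQ m x)

lemma pf_self (hQ : ToepPos Q) (m : ℕ) (x : ℕ → H) : pf Q m x x = q Q m x := by
  unfold pf
  have e1 : x + x = (2:ℂ) • x := by funext k; simp [Pi.smul_apply, two_smul]
  rw [e1, q_smul Q hQ, sub_self, q_zero Q hQ]
  have : Complex.normSq 2 = 4 := by norm_num [Complex.normSq]
  rw [this]
  ring

lemma q_add_expand (hQ : ToepPos Q) (m : ℕ) (x y : ℕ → H) :
    q Q m (x + y) = q Q m x + q Q m y + 2 * pf Q m x y := by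
  have h1 := q_parallelogram Q hQ m x y
  unfold pf at *
  linarith

lemma pf_ratCast_smul (hQ : ToepPos Q) (m : ℕ) (x : ℕ → H) (t : ℚ) (y : ℕ → H) :
    pf Q m x ((t:ℝ) • y) = (t:ℝ) * pf Q m x y := by
  have := map_ratCast_smul (pfHom Q hQ m x) ℝ ℝ t y
  simpa [pfHom, smul_eq_mul] using this

lemma creal_smul (t : ℝ) (y : ℕ → H) : ((t:ℂ)) • y = t • y := by
  rw [← Complex.coe_algebraMap, algebraMap_smul]

lemma q_real_smul (hQ : ToepPos Q) (m : ℕ) (x : ℕ → H) (t : ℝ) : q Q m (t • x) = t ^ 2 * q Q m x := by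
  rw [← creal_smul, q_smul Q hQ]
  congr 1
  rw [Complex.normSq_ofReal]
  ring

lemma pf_neg_right (hQ : ToepPos Q) (m : ℕ) (x y : ℕ → H) :
    pf Q m x (-y) = -pf Q m x y :=
  map_neg (pfHom Q hQ m x) y

lemma pf_sub_right (hQ : ToepPos Q) (m : ℕ) (x y₁ y₂ : ℕ → H) :
    pf Q m x (y₁ - y₂) = pf Q m x y₁ - pf Q m x y₂ :=
  map_sub (pfHom Q hQ m x) y₁ y₂

lemma pf_quad_nonneg (hQ : ToepPos Q) (m : ℕ) (x y : ℕ → H) (t : ℝ) :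
    0 ≤ q Q m y * (t * t) + 2 * pf Q m x y * t + q Q m x := by
  have hrat : ∀ r : ℚ, 0 ≤ q Q m y * ((r:ℝ) * (r:ℝ)) + 2 * pf Q m x y * (r:ℝ) + q Q m x := by
    intro r
    have h0 : 0 ≤ q Q m (x + (r:ℝ) • y) := q_nonneg Q hQ m _
    rw [q_add_expand Q hQ m, q_real_smul Q hQ m, pf_ratCast_smul Q hQ m] at h0
    nlinarith [h0]
  have hcl : IsClosed {t : ℝ | 0 ≤ q Q m y * (t * t) + 2 * pf Q m x y * t + q Q m x} :=
    isClosed_le continuous_const (by continuity)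
  have hdense := Rat.denseRange_cast (𝕜 := ℝ)
  have hsub : Set.range ((↑) : ℚ → ℝ) ⊆
      {t : ℝ | 0 ≤ q Q m y * (t * t) + 2 * pf Q m x y * t + q Q m x} := by
    rintro _ ⟨r, rfl⟩
    exact hrat r
  have : Dense {t : ℝ | 0 ≤ q Q m y * (t * t) + 2 * pf Q m x y * t + q Q m x} :=
    Dense.mono hsub hdense
  have := hcl.closure_eq ▸ this.closure_eq
  exact (Set.eq_univ_iff_forall.1 this t)

lemma pf_sq_le (hQ : ToepPos Q) (m : ℕ) (x y : ℕ → H) :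
    pf Q m x y ^ 2 ≤ q Q m x * q Q m y := by
  have := discrim_le_zero (pf_quad_nonneg Q hQ m x y)
  unfold discrim at this
  nlinarith [this]

lemma pf_abs_le (hQ : ToepPos Q) (m : ℕ) (x y : ℕ → H) :
    |pf Q m x y| ≤ Real.sqrt (q Q m x * q Q m y) := by
  rw [← Real.sqrt_sq_eq_abs]
  exact Real.sqrt_le_sqrt (pf_sq_le Q hQ m x y)

lemma pf_real_smul (hQ : ToepPos Q) (m : ℕ) (x : ℕ → H) (t : ℝ) (y : ℕ → H) :
    pf Q m x (t • y) = t * pf Q m x y := by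
  by_contra hne
  set E := pf Q m x (t • y) - t * pf Q m x y with hE
  have hEne : E ≠ 0 := fun h => hne (by linarith [sub_eq_zero.1 h])
  have hEpos : 0 < |E| := abs_pos.2 hEne
  set K := Real.sqrt (q Q m x * q Q m y) + |pf Q m x y| + 1 with hK
  have hK1 : 1 ≤ K := by
    have h1 : 0 ≤ Real.sqrt (q Q m x * q Q m y) := Real.sqrt_nonneg _
    have h2 : 0 ≤ |pf Q m x y| := abs_nonneg _
    linarith
  have hKpos : 0 < K := by linarith
  obtain ⟨r, hr⟩ := exists_rat_near t (show (0:ℝ) < |E| / (2 * K) by positivity)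
  have step1 : pf Q m x (t • y) - pf Q m x ((r:ℝ) • y) = pf Q m x ((t - (r:ℝ)) • y) := by
    rw [pf_sub_right Q hQ m x (t • y) ((r:ℝ) • y) |>.symm, sub_smul]
  have step2 : |pf Q m x ((t - (r:ℝ)) • y)| ≤ |t - (r:ℝ)| * Real.sqrt (q Q m x * q Q m y) := by
    refine (pf_abs_le Q hQ m x _).trans ?_
    rw [q_real_smul Q hQ m]
    rw [show q Q m x * ((t - (r:ℝ)) ^ 2 * q Q m y) = (t - (r:ℝ))^2 * (q Q m x * q Q m y) by ring]
    rw [Real.sqrt_mul (sq_nonneg _), Real.sqrt_sq_eq_abs]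
  have step3 : |E| ≤ |t - (r:ℝ)| * K := by
    have : E = pf Q m x ((t - (r:ℝ)) • y) + ((r:ℝ) - t) * pf Q m x y := by
      rw [← step1, pf_ratCast_smul Q hQ m]
      ring
    rw [this]
    calc |pf Q m x ((t - (r:ℝ)) • y) + ((r:ℝ) - t) * pf Q m x y|
        ≤ |pf Q m x ((t - (r:ℝ)) • y)| + |((r:ℝ) - t) * pf Q m x y| := abs_add_le _ _
      _ ≤ |t - (r:ℝ)| * Real.sqrt (q Q m x * q Q m y) + |t - (r:ℝ)| * |pf Q m x y| := by
          rw [abs_mul, abs_sub_comm]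
          exact add_le_add step2 le_rfl
      _ ≤ |t - (r:ℝ)| * K := by
          rw [hK]
          have h0 : 0 ≤ |t - (r:ℝ)| := abs_nonneg _
          nlinarith
  have : |E| < |E| := by
    calc |E| ≤ |t - (r:ℝ)| * K := step3
      _ < |E| / (2 * K) * K := by
          exact mul_lt_mul_of_pos_right hr hKpos
      _ = |E| / 2 := by field_simp
      _ < |E| := by linarith
  exact lt_irrefl _ this

/-- complex polarization: the candidate sesquilinear form `B(u, ·)`. -/
noncomputable def Lf (m : ℕ) (u y : ℕ → H) : ℂ :=
  (pf Q m u y : ℂ) + Complex.I * (pf Q m u ((-Complex.I) • y) : ℂ)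

lemma Lf_re (m : ℕ) (u y : ℕ → H) : (Lf Q m u y).re = pf Q m u y := by
  simp [Lf]

lemma Lf_add (hQ : ToepPos Q) (m : ℕ) (u y₁ y₂ : ℕ → H) :
    Lf Q m u (y₁ + y₂) = Lf Q m u y₁ + Lf Q m u y₂ := by
  unfold Lf
  rw [smul_add, pf_add_right Q hQ m, pf_add_right Q hQ m]
  push_cast
  ring

lemma Lf_I_smul (hQ : ToepPos Q) (m : ℕ) (u y : ℕ → H) :
    Lf Q m u (Complex.I • y) = Complex.I * Lf Q m u y := by
  unfold Lf
  have e1 : (-Complex.I) • (Complex.I • y) = y := by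
    rw [smul_smul]
    norm_num
  rw [e1]
  have e2 : pf Q m u (Complex.I • y) = -pf Q m u ((-Complex.I) • y) := by
    rw [show Complex.I • y = -((-Complex.I) • y) by rw [neg_smul, neg_neg],
      pf_neg_right Q hQ m]
  rw [e2]
  push_cast
  ring_nf
  rw [Complex.I_sq]
  ring

lemma Lf_smul (hQ : ToepPos Q) (m : ℕ) (u : ℕ → H) (c : ℂ) (y : ℕ → H) :
    Lf Q m u (c • y) = c * Lf Q m u y := by
  have hre : ∀ (t : ℝ) (z : ℕ → H), Lf Q m u ((t:ℂ) • z) = (t:ℂ) * Lf Q m u z := by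
    intro t z
    rw [creal_smul]
    unfold Lf
    have : (-Complex.I) • (t • z) = t • ((-Complex.I) • z) := smul_comm _ _ _
    rw [this, pf_real_smul Q hQ m, pf_real_smul Q hQ m]
    push_cast
    ring
  have hdecomp : c • y = (c.re:ℂ) • y + (c.im:ℂ) • (Complex.I • y) := by
    rw [smul_smul, ← add_smul, Complex.re_add_im]
  rw [hdecomp, Lf_add Q hQ m, hre, hre, Lf_I_smul Q hQ m]
  conv_rhs => rw [← Complex.re_add_im c]
  ring

lemma Lf_self (hQ : ToepPos Q) (m : ℕ) (u : ℕ → H) : Lf Q m u u = (q Q m u : ℂ) := by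
  unfold Lf
  rw [pf_self Q hQ m]
  have : pf Q m u ((-Complex.I) • u) = 0 := by
    unfold pf
    have e1 : u + (-Complex.I) • u = (1 - Complex.I) • u := by
      rw [sub_smul, one_smul, neg_smul, sub_eq_add_neg]
    have e2 : u - (-Complex.I) • u = (1 + Complex.I) • u := by
      rw [add_smul, one_smul, neg_smul, sub_neg_eq_add]
    rw [e1, e2, q_smul Q hQ, q_smul Q hQ]
    have h1 : Complex.normSq (1 - Complex.I) = 2 := by
      norm_num [Complex.normSq_apply, Complex.sub_re, Complex.sub_im]
    have h2 : Complex.normSq (1 + Complex.I) = 2 := by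
      norm_num [Complex.normSq_apply, Complex.add_re, Complex.add_im]
    rw [h1, h2]
    ring
  rw [this]
  push_cast
  ring

lemma Lf_normSq_le (hQ : ToepPos Q) (m : ℕ) (u y : ℕ → H) :
    Complex.normSq (Lf Q m u y) ≤ q Q m u * q Q m y := by
  rcases eq_or_ne (Lf Q m u y) 0 with h0 | h0
  · rw [h0]
    simp only [Complex.normSq_zero]
    exact mul_nonneg (q_nonneg Q hQ m u) (q_nonneg Q hQ m y)
  · set L := Lf Q m u y with hL
    have habs : (0:ℝ) < ‖L‖ := norm_pos_iff.mpr h0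
    have habsne : ((‖L‖ : ℝ) : ℂ) ≠ 0 := by exact_mod_cast habs.ne'
    set c : ℂ := (starRingEnd ℂ) L / ((‖L‖ : ℝ) : ℂ) with hc
    have hnc : Complex.normSq c = 1 := by
      rw [hc, Complex.normSq_div, Complex.normSq_conj, Complex.normSq_ofReal,
        ← Complex.sq_norm]
      field_simp [pow_two]
    have hcL : Lf Q m u (c • y) = ((‖L‖ : ℝ) : ℂ) := by
      rw [Lf_smul Q hQ m, ← hL, hc, div_mul_eq_mul_div, div_eq_iff habsne,
        mul_comm ((starRingEnd ℂ) L) L, Complex.mul_conj, ← Complex.sq_norm]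
      push_cast
      ring
    have hre : ‖L‖ = pf Q m u (c • y) := by
      rw [← Lf_re Q m u (c • y), hcL]
      simp
    have hq : q Q m (c • y) = q Q m y := by rw [q_smul Q hQ, hnc, one_mul]
    have hsq := pf_sq_le Q hQ m u (c • y)
    rw [hq, ← hre] at hsq
    rw [← Complex.sq_norm]
    exact hsq

lemma pf_congr (m : ℕ) (x : ℕ → H) {y y' : ℕ → H} (h : ∀ k, k ≤ m → y k = y' k) :
    pf Q m x y = pf Q m x y' := by
  unfold pf
  rw [q_congr Q m (v := x + y) (v' := x + y') fun k hk => by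
      show x k + y k = x k + y' k
      rw [h k hk],
    q_congr Q m (v := x - y) (v' := x - y') fun k hk => by
      show x k - y k = x k - y' k
      rw [h k hk]]

lemma Lf_congr (m : ℕ) (u : ℕ → H) {y y' : ℕ → H} (h : ∀ k, k ≤ m → y k = y' k) :
    Lf Q m u y = Lf Q m u y' := by
  unfold Lf
  rw [pf_congr Q m u h, pf_congr Q m u (y := (-Complex.I) • y) (y' := (-Complex.I) • y')
    fun k hk => by
      show (-Complex.I) • y k = (-Complex.I) • y' k
      rw [h k hk]]

end SchurAux

namespace SchurAux

variable (Q : ℤ → H →L[ℂ] H)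

lemma schurQF_congr (m : ℕ) (S : ℕ → ℕ → H →L[ℂ] H) {v v' : ℕ → H}
    (h : ∀ k, k ≤ m → v k = v' k) : schurQF m S v = schurQF m S v' := by
  unfold schurQF
  refine Finset.sum_congr rfl fun i hi => Finset.sum_congr rfl fun j hj => ?_
  rw [h i (by simpa [Nat.lt_succ_iff] using hi), h j (by simpa [Nat.lt_succ_iff] using hj)]

lemma schurQF_shift (m : ℕ) (S : ℕ → ℕ → H →L[ℂ] H) (v : ℕ → H) :
    schurQF (m + 1) S (shiftv v) = schurQF m (fun i j => S (i + 1) (j + 1)) v := by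
  unfold schurQF
  rw [Finset.sum_range_succ']
  have h0 : shiftv v 0 = 0 := rfl
  simp only [h0, inner_zero_right, Complex.zero_re, Finset.sum_const_zero, add_zero]
  refine Finset.sum_congr rfl fun i _ => ?_
  rw [Finset.sum_range_succ']
  simp only [h0, map_zero, inner_zero_left, Complex.zero_re, add_zero]
  rfl

/-- The main variational identity: the maximal Schur complement form agrees with the
infimum of the Toeplitz quadratic form over extensions. -/
lemma key (hQ : ToepPos Q) {m : ℕ} {S : ℕ → ℕ → H →L[ℂ] H} (hS : IsSchurToep Q m S)
    (u : ℕ → H) (hu : ∀ k, m < k → u k = 0) : schurQF m S u = q Q m u := by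
  obtain ⟨hsupp, hherm, hpos, hdom, hmax⟩ := hS
  refine le_antisymm ?_ ?_
  · refine le_q Q m fun r hr => ?_
    obtain ⟨N, w, hw1, hw2, rfl⟩ := hr
    rw [schurQF_congr m S fun k hk => (hw1 k hk).symm]
    exact hdom N w hw2
  · rcases eq_or_lt_of_le (q_nonneg Q hQ m u) with h0 | hqu
    · rw [← h0]
      exact hpos u
    · -- construct the rank-one competitor
      set L : (ℕ → H) → ℂ := Lf Q m u with hLdef
      have hLadd : ∀ y₁ y₂, L (y₁ + y₂) = L y₁ + L y₂ := Lf_add Q hQ m u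
      have hLsmul : ∀ (c : ℂ) y, L (c • y) = c * L y := Lf_smul Q hQ m u
      set c0 : ℂ := ((q Q m u : ℝ) : ℂ)⁻¹ with hc0
      have hc0conj : (starRingEnd ℂ) c0 = c0 := by
        rw [hc0, map_inv₀, Complex.conj_ofReal]
      -- the functionals and their Riesz vectors
      have hφbound : ∀ (i : ℕ) (h : H), ‖L (sing i h)‖ ≤
          Real.sqrt (q Q m u * ‖Q 0‖) * ‖h‖ := by
        intro i h
        have h1 : Complex.normSq (L (sing i h)) ≤ q Q m u * (‖Q 0‖ * ‖h‖ ^ 2) :=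
          (Lf_normSq_le Q hQ m u (sing i h)).trans
            (mul_le_mul_of_nonneg_left (q_sing_le Q hQ m i h) (le_of_lt hqu))
        have h2 : ‖L (sing i h)‖ = Real.sqrt (Complex.normSq (L (sing i h))) := by
          rw [Complex.norm_def]
        rw [h2]
        have h3 : q Q m u * (‖Q 0‖ * ‖h‖ ^ 2) = (q Q m u * ‖Q 0‖) * ‖h‖ ^ 2 := by ring
        rw [h3] at h1
        refine (Real.sqrt_le_sqrt h1).trans ?_
        rw [Real.sqrt_mul (by positivity), Real.sqrt_sq (norm_nonneg h)]
      let φ : ℕ → H →L[ℂ] ℂ := fun i => LinearMap.mkContinuous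
        { toFun := fun h => L (sing i h)
          map_add' := fun a b => by
            show L (sing i (a + b)) = L (sing i a) + L (sing i b)
            rw [sing_add, hLadd]
          map_smul' := fun c a => by
            show L (sing i (c • a)) = c * L (sing i a)
            rw [sing_smul, hLsmul] }
        (Real.sqrt (q Q m u * ‖Q 0‖)) (fun h => hφbound _ h)
      let ξ : ℕ → H := fun i => (InnerProductSpace.toDual ℂ H).symm (φ i)
      have hξ : ∀ i (h : H), ⟪ξ i, h⟫_ℂ = L (sing i h) := fun i h =>
        InnerProductSpace.toDual_symm_apply
      set X : ℕ → ℕ → H →L[ℂ] H := fun i j => if i ≤ m ∧ j ≤ m then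
        c0 • ((innerSL ℂ (ξ j)).smulRight (ξ i)) else 0 with hXdef
      have hXapply : ∀ i j, i ≤ m → j ≤ m → ∀ h : H,
          X i j h = (c0 * ⟪ξ j, h⟫_ℂ) • ξ i := by
        intro i j hi hj h
        rw [hXdef]
        simp only [if_pos (And.intro hi hj)]
        rw [ContinuousLinearMap.smul_apply, ContinuousLinearMap.smulRight_apply,
          innerSL_apply_apply, smul_smul]
      -- the head truncation
      set hd : (ℕ → H) → (ℕ → H) := fun v k => if k ≤ m then v k else 0 with hhd
      have hhead : ∀ v : ℕ → H, ∑ i ∈ Finset.range (m + 1), ⟪ξ i, v i⟫_ℂ = L (hd v) := by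
        intro v
        have e1 : ∀ i, ⟪ξ i, v i⟫_ℂ = L (sing i (v i)) := fun i => hξ i (v i)
        simp only [e1]
        set LHom : (ℕ → H) →+ ℂ := AddMonoidHom.mk' L hLadd with hLHom
        have e2 : ∑ i ∈ Finset.range (m + 1), L (sing i (v i)) =
            LHom (∑ i ∈ Finset.range (m + 1), sing i (v i)) := by
          rw [map_sum]
          rfl
        rw [e2]
        have e3 : (∑ i ∈ Finset.range (m + 1), sing i (v i)) = hd v := by
          funext k
          rw [Finset.sum_apply]
          simp only [sing]
          rw [Finset.sum_ite_eq (Finset.range (m + 1)) k v]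
          simp [Nat.lt_succ_iff, hhd]
        rw [e3]
        rfl
      have hform : ∀ v : ℕ → H, schurQF m X v =
          (q Q m u)⁻¹ * Complex.normSq (L (hd v)) := by
        intro v
        unfold schurQF
        have e1 : ∀ i ∈ Finset.range (m+1), ∀ j ∈ Finset.range (m+1),
            (⟪X i j (v j), v i⟫_ℂ) = c0 * ((starRingEnd ℂ) ⟪ξ j, v j⟫_ℂ * ⟪ξ i, v i⟫_ℂ) := by
          intro i hi j hj
          rw [hXapply i j (by simpa [Nat.lt_succ_iff] using hi)
            (by simpa [Nat.lt_succ_iff] using hj), inner_smul_left, map_mul, hc0conj]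
          ring
        calc ∑ i ∈ Finset.range (m+1), ∑ j ∈ Finset.range (m+1), (⟪X i j (v j), v i⟫_ℂ).re
            = (∑ i ∈ Finset.range (m+1), ∑ j ∈ Finset.range (m+1),
              c0 * ((starRingEnd ℂ) ⟪ξ j, v j⟫_ℂ * ⟪ξ i, v i⟫_ℂ)).re := by
              rw [Complex.re_sum]
              refine Finset.sum_congr rfl fun i hi => ?_
              rw [Complex.re_sum]
              exact Finset.sum_congr rfl fun j hj => by rw [e1 i hi j hj]
          _ = (c0 * ((starRingEnd ℂ) (L (hd v)) * (L (hd v)))).re := by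
              congr 1
              rw [← hhead]
              rw [map_sum (starRingEnd ℂ) (fun i => ⟪ξ i, v i⟫_ℂ) (Finset.range (m+1))]
              rw [Finset.sum_mul_sum]
              rw [Finset.mul_sum]
              rw [Finset.sum_comm]
              refine Finset.sum_congr rfl fun i _ => ?_
              rw [Finset.mul_sum]
          _ = (q Q m u)⁻¹ * Complex.normSq (L (hd v)) := by
              rw [mul_comm ((starRingEnd ℂ) (L (hd v))), Complex.mul_conj]
              rw [hc0, ← Complex.ofReal_inv, ← Complex.ofReal_mul]
              rw [Complex.ofReal_re]
      -- the four competitor conditions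
      have cond1 : ∀ i j, m < i ∨ m < j → X i j = 0 := by
        intro i j hij
        rw [hXdef]
        exact if_neg (by omega)
      have cond2 : ∀ i j, (X i j).adjoint = X j i := by
        intro i j
        by_cases hij : i ≤ m ∧ j ≤ m
        · refine ((ContinuousLinearMap.eq_adjoint_iff (X j i) (X i j)).2 ?_).symm
          intro a b
          rw [hXapply j i hij.2 hij.1 a, hXapply i j hij.1 hij.2 b, inner_smul_left,
            inner_smul_right, map_mul, hc0conj, ← inner_conj_symm a (ξ i)]
          ring
        · have h1 : X i j = 0 := by rw [hXdef]; exact if_neg (by tauto)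
          have h2 : X j i = 0 := by rw [hXdef]; exact if_neg (by tauto)
          rw [h1, h2]
          exact (ContinuousLinearMap.eq_adjoint_iff (0 : H →L[ℂ] H) (0 : H →L[ℂ] H)).2
            (fun x y => by simp) |>.symm
      have cond3 : ∀ v, 0 ≤ schurQF m X v := by
        intro v
        rw [hform]
        exact mul_nonneg (inv_nonneg.2 (le_of_lt hqu)) (Complex.normSq_nonneg _)
      have cond4 : ∀ N (v : ℕ → H), (∀ k, N ≤ k → v k = 0) →
          schurQF m X v ≤ toepQF Q N v := by
        intro N v hv
        rw [hform]
        have h1 : Complex.normSq (L (hd v)) ≤ q Q m u * q Q m (hd v) :=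
          Lf_normSq_le Q hQ m u (hd v)
        have h2 : q Q m (hd v) ≤ toepQF Q N v :=
          q_le Q hQ m ⟨N, v, fun k hk => (if_pos hk).symm, hv, rfl⟩
        calc (q Q m u)⁻¹ * Complex.normSq (L (hd v)) ≤
            (q Q m u)⁻¹ * (q Q m u * q Q m (hd v)) :=
              mul_le_mul_of_nonneg_left h1 (inv_nonneg.2 (le_of_lt hqu))
          _ = q Q m (hd v) := by field_simp
          _ ≤ toepQF Q N v := h2
      have hmaxu := hmax X cond1 cond2 cond3 cond4 u
      rw [hform] at hmaxu
      have hhdu : hd u = u := by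
        funext k
        by_cases hk : k ≤ m
        · exact if_pos hk
        · rw [hhd]
          simp only [if_neg hk]
          exact (hu k (by omega)).symm
      rw [hhdu, hLdef, Lf_self Q hQ m u, Complex.normSq_ofReal] at hmaxu
      calc q Q m u = (q Q m u)⁻¹ * (q Q m u * q Q m u) := by field_simp
        _ ≤ schurQF m S u := hmaxu

end SchurAux

/-- Inheritance structure: the lower-right corner of `S(m)` is `S(m-1)`. -/
theorem schur_toeplitz_inheritance (Q : ℤ → H →L[ℂ] H) (hQ : ToepPos Q)
    (m : ℕ) (hm : 1 ≤ m) (S S' : ℕ → ℕ → H →L[ℂ] H)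
    (hS : IsSchurToep Q m S) (hS' : IsSchurToep Q (m - 1) S') :
    ∀ i j : ℕ, S (i + 1) (j + 1) = S' i j := by
  obtain ⟨n, rfl⟩ : ∃ n, m = n + 1 := ⟨m - 1, by omega⟩
  have hS'' : IsSchurToep Q n S' := by
    have : n + 1 - 1 = n := by omega
    rwa [this] at hS'
  have hforms : ∀ v : ℕ → H,
      schurQF n (fun i j => S (i + 1) (j + 1)) v = schurQF n S' v := by
    intro v
    set v' : ℕ → H := fun k => if k ≤ n then v k else 0 with hv'
    have hsupp' : ∀ k, n < k → v' k = 0 := fun k hk => if_neg (by omega)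
    have h1 : schurQF n S' v = schurQF n S' v' :=
      SchurAux.schurQF_congr n S' (fun k hk => (if_pos hk).symm)
    have h2 : schurQF n (fun i j => S (i + 1) (j + 1)) v =
        schurQF n (fun i j => S (i + 1) (j + 1)) v' :=
      SchurAux.schurQF_congr n _ (fun k hk => (if_pos hk).symm)
    have h3 : schurQF n S' v' = SchurAux.q Q n v' := SchurAux.key Q hQ hS'' v' hsupp'
    have hshiftsupp : ∀ k, n + 1 < k → SchurAux.shiftv v' k = 0 := by
      intro k hk
      match k, hk with
      | k+1, hk => exact hsupp' k (by omega)
    have h4 : schurQF (n + 1) S (SchurAux.shiftv v') =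
        SchurAux.q Q (n + 1) (SchurAux.shiftv v') :=
      SchurAux.key Q hQ hS (SchurAux.shiftv v') hshiftsupp
    have h5 := SchurAux.q_shift Q n v'
    have h6 := SchurAux.schurQF_shift (n) S v'
    linarith
  set D : ℕ → ℕ → H →L[ℂ] H := fun i j => S (i + 1) (j + 1) - S' i j with hD
  have hDform : ∀ v : ℕ → H, ∑ i ∈ Finset.range (n + 1), ∑ j ∈ Finset.range (n + 1),
      (⟪D i j (v j), v i⟫_ℂ).re = 0 := by
    intro v
    have h := hforms v
    unfold schurQF at h
    simp only [hD, ContinuousLinearMap.sub_apply, inner_sub_left, Complex.sub_re,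
      Finset.sum_sub_distrib]
    rw [h, sub_self]
  have hDadj : ∀ i j, (D i j).adjoint = D j i := by
    intro i j
    rw [hD]
    simp only
    rw [map_sub, hS.2.1, hS''.2.1]
  set Φ : (ℕ → H) → (ℕ → H) → ℂ := fun v w => ∑ i ∈ Finset.range (n + 1),
    ∑ j ∈ Finset.range (n + 1), ⟪D i j (w j), v i⟫_ℂ with hΦ
  have hΦself : ∀ v, Φ v v = 0 := by
    intro v
    have hre : (Φ v v).re = 0 := by
      rw [hΦ]
      simp only
      rw [Complex.re_sum]
      rw [show ∑ i ∈ Finset.range (n+1), (∑ j ∈ Finset.range (n+1),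
        ⟪D i j (v j), v i⟫_ℂ).re = ∑ i ∈ Finset.range (n+1), ∑ j ∈ Finset.range (n+1),
        (⟪D i j (v j), v i⟫_ℂ).re from Finset.sum_congr rfl fun i _ => Complex.re_sum _ _]
      exact hDform v
    have hconj : (starRingEnd ℂ) (Φ v v) = Φ v v := by
      rw [hΦ]
      simp only
      rw [map_sum]
      rw [show ∑ i ∈ Finset.range (n+1), (starRingEnd ℂ) (∑ j ∈ Finset.range (n+1),
        ⟪D i j (v j), v i⟫_ℂ) = ∑ i ∈ Finset.range (n+1), ∑ j ∈ Finset.range (n+1),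
        (starRingEnd ℂ) ⟪D i j (v j), v i⟫_ℂ from
        Finset.sum_congr rfl fun i _ => map_sum _ _ _]
      have e1 : ∀ i j, (starRingEnd ℂ) ⟪D i j (v j), v i⟫_ℂ = ⟪D j i (v i), v j⟫_ℂ := by
        intro i j
        rw [inner_conj_symm, ← hDadj i j, ContinuousLinearMap.adjoint_inner_left]
      simp only [e1]
      exact Finset.sum_comm
    have him : (Φ v v).im = 0 := by
      have := congrArg Complex.im hconj
      rw [Complex.conj_im] at this
      linarith
    exact Complex.ext hre him
  have hΦaddL : ∀ v v' w, Φ (v + v') w = Φ v w + Φ v' w := by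
    intro v v' w
    rw [hΦ]
    simp only [Pi.add_apply, inner_add_right]
    rw [← Finset.sum_add_distrib]
    exact Finset.sum_congr rfl fun i _ => by rw [← Finset.sum_add_distrib]
  have hΦaddR : ∀ v w w', Φ v (w + w') = Φ v w + Φ v w' := by
    intro v w w'
    rw [hΦ]
    simp only [Pi.add_apply, map_add, inner_add_left]
    rw [← Finset.sum_add_distrib]
    exact Finset.sum_congr rfl fun i _ => by rw [← Finset.sum_add_distrib]
  have hΦsmulL : ∀ (c : ℂ) v w, Φ (c • v) w = c * Φ v w := by
    intro c v w
    rw [hΦ]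
    simp only [Pi.smul_apply, inner_smul_right]
    rw [Finset.mul_sum]
    exact Finset.sum_congr rfl fun i _ => by rw [Finset.mul_sum]
  have hΦsmulR : ∀ (c : ℂ) v w, Φ v (c • w) = (starRingEnd ℂ) c * Φ v w := by
    intro c v w
    rw [hΦ]
    simp only [Pi.smul_apply, map_smul, inner_smul_left]
    rw [Finset.mul_sum]
    exact Finset.sum_congr rfl fun i _ => by rw [Finset.mul_sum]
  have hΦzero : ∀ v w, Φ v w = 0 := by
    intro v w
    have e := hΦself (v + w)
    rw [hΦaddL, hΦaddR v v w, hΦaddR w v w, hΦself v, hΦself w] at e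
    have h1 : Φ v w + Φ w v = 0 := by linear_combination e
    have e2 := hΦself (v + Complex.I • w)
    rw [hΦaddL, hΦaddR v v (Complex.I • w),
      hΦaddR (Complex.I • w) v (Complex.I • w)] at e2
    simp only [hΦsmulL, hΦsmulR, hΦself v, hΦself w, Complex.conj_I, mul_zero, add_zero,
      zero_add, neg_mul, neg_zero] at e2
    have h2 : Φ v w = Φ w v :=
      mul_left_cancel₀ Complex.I_ne_zero (neg_add_eq_zero.mp e2)
    have h3 : Φ v w + Φ v w = 0 := by rw [h2] at h1 ⊢; exact h1
    have h4 : (2:ℂ) * Φ v w = 0 := by rw [two_mul]; exact h3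
    exact (mul_eq_zero.1 h4).resolve_left (by norm_num)
  have hentry : ∀ i j, i ≤ n → j ≤ n → D i j = 0 := by
    intro i j hi hj
    ext b
    rw [ContinuousLinearMap.zero_apply, ← inner_self_eq_zero (𝕜 := ℂ)]
    have hval := hΦzero (SchurAux.sing i (D i j b)) (SchurAux.sing j b)
    rw [hΦ] at hval
    simp only at hval
    have e1 : ∀ i' ∈ Finset.range (n+1), i' ≠ i → (∑ j' ∈ Finset.range (n+1),
        ⟪D i' j' (SchurAux.sing j b j'), SchurAux.sing i (D i j b) i'⟫_ℂ) = 0 := by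
      intro i' _ hi'
      exact Finset.sum_eq_zero fun j' _ => by
        rw [show SchurAux.sing i (D i j b) i' = 0 from if_neg hi', inner_zero_right]
    rw [Finset.sum_eq_single_of_mem i (Finset.mem_range.2 (by omega)) e1] at hval
    have e2 : ∀ j' ∈ Finset.range (n+1), j' ≠ j →
        ⟪D i j' (SchurAux.sing j b j'), SchurAux.sing i (D i j b) i⟫_ℂ = 0 := by
      intro j' _ hj'
      rw [show SchurAux.sing j b j' = 0 from if_neg hj', map_zero, inner_zero_left]
    rw [Finset.sum_eq_single_of_mem j (Finset.mem_range.2 (by omega)) e2] at hval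
    rw [show SchurAux.sing j b j = b from if_pos rfl,
      show SchurAux.sing i (D i j b) i = D i j b from if_pos rfl] at hval
    exact hval
  intro i j
  by_cases hij : i ≤ n ∧ j ≤ n
  · have := hentry i j hij.1 hij.2
    rw [hD] at this
    simp only at this
    exact sub_eq_zero.1 this
  · have h1 : S (i + 1) (j + 1) = 0 := hS.1 (i + 1) (j + 1) (by omega)
    have h2 : S' i j = 0 := hS''.1 i j (by omega)
    rw [h1, h2]


end
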